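/- Theorem 4 (ρ_{X2} for 2-D mapping): let N ≥ 2 and let σ, π be independent uniformly random permutations of Fin N (product measure); set X_i = u (σ i), Y_i = u (π i), and, with N = 2M, define the polarization-x energy E^x_w = X_{2w}² + X_{2w+1}² and the polarization-y energy E^y_w = Y_{2w}² + Y_{2w+1}² for w : Fin M, M ≥ 2. Then for any two distinct symbol times w ≠ w', E[E^x_w · (E^y_{w'})²] = 4·m₂·m₄ + 4·ρ₁·m₂, where ρ₁ = (N·m₂² − m₄)/(N − 1). -/

import Mathlib

/-- Expectation of a real-valued random variable on the finite probability space
`Equiv.Perm (Fin N) × Equiv.Perm (Fin N)` of pairs of independent uniformly random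
permutations (product of uniform measures = uniform measure on the product). -/
noncomputable def permExpect2 (N : ℕ)
    (f : Equiv.Perm (Fin N) × Equiv.Perm (Fin N) → ℝ) : ℝ :=
  (∑ p : Equiv.Perm (Fin N) × Equiv.Perm (Fin N), f p)
    / (Fintype.card (Equiv.Perm (Fin N) × Equiv.Perm (Fin N)) : ℝ)

/-- Empirical `k`-th moment of the amplitude block `u`. -/
noncomputable def empMoment (N : ℕ) (u : Fin N → ℝ) (k : ℕ) : ℝ :=
  (1 / (N : ℝ)) * ∑ i : Fin N, (u i) ^ k

/-- Symbol energy at time `w` built from positions `2w` and `2w+1` of a permuted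
block of length `N = 2M`: `X_{2w}² + X_{2w+1}²` with `X_i = u (σ i)`. -/
noncomputable def energy2D (M : ℕ) (u : Fin (2 * M) → ℝ)
    (σ : Equiv.Perm (Fin (2 * M))) (w : Fin M) : ℝ :=
  (u (σ ⟨2 * w.val, by have := w.isLt; omega⟩)) ^ 2
    + (u (σ ⟨2 * w.val + 1, by have := w.isLt; omega⟩)) ^ 2

open Finset

section aux
variable {n : ℕ}

lemma sum_perm_apply_eq (f : Fin n → ℝ) (a b : Fin n) :
    ∑ σ : Equiv.Perm (Fin n), f (σ a) = ∑ σ : Equiv.Perm (Fin n), f (σ b) :=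
  Fintype.sum_equiv (Equiv.mulRight (Equiv.swap a b)) _ _ (fun σ => by
    simp [Equiv.Perm.mul_apply])

lemma sum_perm_single (f : Fin n → ℝ) (a : Fin n) :
    (n : ℝ) * ∑ σ : Equiv.Perm (Fin n), f (σ a)
      = (Fintype.card (Equiv.Perm (Fin n)) : ℝ) * ∑ i, f i := by
  have h1 : ∑ b : Fin n, ∑ σ : Equiv.Perm (Fin n), f (σ b)
      = (n : ℝ) * ∑ σ : Equiv.Perm (Fin n), f (σ a) := by
    rw [Finset.sum_congr rfl (fun b _ => sum_perm_apply_eq f b a)]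
    simp [mul_comm]
  rw [← h1, Finset.sum_comm]
  have h2 : ∀ σ : Equiv.Perm (Fin n), ∑ b, f (σ b) = ∑ i, f i := fun σ => Equiv.sum_comp σ f
  rw [Finset.sum_congr rfl (fun σ _ => h2 σ)]
  simp [mul_comm]

lemma sum_perm_pair_eq (h : Fin n → Fin n → ℝ) (a b b' : Fin n) (hb : b ≠ a) (hb' : b' ≠ a) :
    ∑ σ : Equiv.Perm (Fin n), h (σ a) (σ b)
      = ∑ σ : Equiv.Perm (Fin n), h (σ a) (σ b') :=
  Fintype.sum_equiv (Equiv.mulRight (Equiv.swap b b')) _ _ (fun σ => by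
    simp [Equiv.Perm.mul_apply, Equiv.swap_apply_of_ne_of_ne hb.symm hb'.symm])

lemma sum_perm_pair (h : Fin n → Fin n → ℝ) (a b : Fin n) (hab : a ≠ b) :
    (n : ℝ) * ((n : ℝ) - 1) * ∑ σ : Equiv.Perm (Fin n), h (σ a) (σ b)
      = (Fintype.card (Equiv.Perm (Fin n)) : ℝ)
          * ((∑ i, ∑ j, h i j) - ∑ i, h i i) := by
  have hn1 : 1 ≤ n := a.pos
  have hA : ∑ b' : Fin n, ∑ σ : Equiv.Perm (Fin n), h (σ a) (σ b')
      = ∑ σ : Equiv.Perm (Fin n), ∑ j, h (σ a) j := by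
    rw [Finset.sum_comm]
    exact Finset.sum_congr rfl (fun σ _ => Equiv.sum_comp σ (fun j => h (σ a) j))
  have hfull : (n : ℝ) * ∑ σ : Equiv.Perm (Fin n), (∑ j, h (σ a) j)
      = (Fintype.card (Equiv.Perm (Fin n)) : ℝ) * ∑ i, ∑ j, h i j :=
    sum_perm_single (fun i => ∑ j, h i j) a
  have hdiag : (n : ℝ) * ∑ σ : Equiv.Perm (Fin n), h (σ a) (σ a)
      = (Fintype.card (Equiv.Perm (Fin n)) : ℝ) * ∑ i, h i i :=
    sum_perm_single (fun i => h i i) a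
  have hsplit : ∑ b' : Fin n, ∑ σ : Equiv.Perm (Fin n), h (σ a) (σ b')
      = (∑ σ : Equiv.Perm (Fin n), h (σ a) (σ a))
        + ((n : ℝ) - 1) * ∑ σ : Equiv.Perm (Fin n), h (σ a) (σ b) := by
    rw [← Finset.sum_erase_add Finset.univ _ (Finset.mem_univ a), add_comm]
    congr 1
    rw [Finset.sum_congr rfl (fun b' hb' =>
      sum_perm_pair_eq h a b' b (Finset.ne_of_mem_erase hb') hab.symm)]
    rw [Finset.sum_const, Finset.card_erase_of_mem (Finset.mem_univ a)]
    simp [Nat.cast_sub hn1, nsmul_eq_mul]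
  nlinarith [hA, hfull, hdiag, hsplit]

end aux
/-- Theorem 4 (ρ_{X2} for 2-D mapping): with independent uniform permutations `σ, π`
providing each polarization its own permuted copy of the block (`N = 2M`, `M ≥ 2`),
for distinct symbol times `w ≠ w'`,
`E[E^x_w·(E^y_{w'})²] = 4·m₂·m₄ + 4·ρ₁·m₂` with `ρ₁ = (N·m₂² − m₄)/(N−1)`. -/
theorem rhoX2_twoD (M : ℕ) (hM : 2 ≤ M) (u : Fin (2 * M) → ℝ)
    (w w' : Fin M) (hww' : w ≠ w') :
    permExpect2 (2 * M)
        (fun p => energy2D M u p.1 w * (energy2D M u p.2 w') ^ 2)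
      = 4 * empMoment (2 * M) u 2 * empMoment (2 * M) u 4
        + 4 * ((((2 * M : ℕ) : ℝ) * (empMoment (2 * M) u 2) ^ 2 - empMoment (2 * M) u 4)
            / (((2 * M : ℕ) : ℝ) - 1)) * empMoment (2 * M) u 2 := by
  set K : ℝ := (Fintype.card (Equiv.Perm (Fin (2 * M))) : ℝ) with hK
  set m2 : ℝ := empMoment (2 * M) u 2 with hm2
  set m4 : ℝ := empMoment (2 * M) u 4 with hm4
  have hK0 : K ≠ 0 := Nat.cast_ne_zero.mpr Fintype.card_ne_zero
  have hn0 : ((2 * M : ℕ) : ℝ) ≠ 0 := by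
    have : 0 < 2 * M := by omega
    positivity
  have hn1 : ((2 * M : ℕ) : ℝ) - 1 ≠ 0 := by
    have h4 : (4 : ℝ) ≤ ((2 * M : ℕ) : ℝ) := by
      have : (4 : ℕ) ≤ 2 * M := by omega
      exact_mod_cast this
    linarith
  have hsum2 : ∑ i, (u i) ^ 2 = ((2 * M : ℕ) : ℝ) * m2 := by
    rw [hm2, empMoment]; field_simp
  have hsum4 : ∑ i, (u i) ^ 4 = ((2 * M : ℕ) : ℝ) * m4 := by
    rw [hm4, empMoment]; field_simp
  have key2 : ∀ a : Fin (2 * M), ∑ σ : Equiv.Perm (Fin (2 * M)), (u (σ a)) ^ 2 = K * m2 := by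
    intro a
    have h := sum_perm_single (fun i => (u i) ^ 2) a
    rw [hsum2] at h
    apply mul_left_cancel₀ hn0
    rw [h]; ring
  have key4 : ∀ a : Fin (2 * M), ∑ σ : Equiv.Perm (Fin (2 * M)), (u (σ a)) ^ 4 = K * m4 := by
    intro a
    have h := sum_perm_single (fun i => (u i) ^ 4) a
    rw [hsum4] at h
    apply mul_left_cancel₀ hn0
    rw [h]; ring
  have keyT : ∀ a b : Fin (2 * M), a ≠ b →
      ∑ σ : Equiv.Perm (Fin (2 * M)), (u (σ a)) ^ 2 * (u (σ b)) ^ 2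
        = K * ((((2 * M : ℕ) : ℝ) * m2 ^ 2 - m4) / (((2 * M : ℕ) : ℝ) - 1)) := by
    intro a b hab
    have h := sum_perm_pair (fun i j => (u i) ^ 2 * (u j) ^ 2) a b hab
    have hfull : (∑ i, ∑ j, (u i) ^ 2 * (u j) ^ 2) = (((2 * M : ℕ) : ℝ) * m2) ^ 2 := by
      rw [← hsum2, ← Finset.sum_mul_sum]; ring
    have hdiag : (∑ i : Fin (2 * M), (u i) ^ 2 * (u i) ^ 2) = ((2 * M : ℕ) : ℝ) * m4 := by
      rw [← hsum4]
      exact Finset.sum_congr rfl (fun i _ => by ring)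
    rw [hfull, hdiag, ← hK] at h
    rw [← mul_div_assoc, eq_div_iff hn1]
    apply mul_left_cancel₀ hn0
    linear_combination h
  have hw2 : 2 * w'.val + 1 < 2 * M := by have := w'.isLt; omega
  have hw1 : 2 * w'.val < 2 * M := by omega
  have hE1 : ∑ σ : Equiv.Perm (Fin (2 * M)), energy2D M u σ w = K * (2 * m2) := by
    unfold energy2D
    rw [Finset.sum_add_distrib, key2, key2]
    ring
  have hE2 : ∑ π : Equiv.Perm (Fin (2 * M)), (energy2D M u π w') ^ 2
      = K * (2 * m4 + 2 * ((((2 * M : ℕ) : ℝ) * m2 ^ 2 - m4) / (((2 * M : ℕ) : ℝ) - 1))) := by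
    unfold energy2D
    have hexp : ∀ π : Equiv.Perm (Fin (2 * M)),
        ((u (π ⟨2 * w'.val, hw1⟩)) ^ 2 + (u (π ⟨2 * w'.val + 1, hw2⟩)) ^ 2) ^ 2
          = (u (π ⟨2 * w'.val, hw1⟩)) ^ 4 + (u (π ⟨2 * w'.val + 1, hw2⟩)) ^ 4
            + 2 * ((u (π ⟨2 * w'.val, hw1⟩)) ^ 2 * (u (π ⟨2 * w'.val + 1, hw2⟩)) ^ 2) := by
      intro π; ring
    rw [Finset.sum_congr rfl (fun π _ => hexp π)]
    rw [Finset.sum_add_distrib, Finset.sum_add_distrib, key4, key4, ← Finset.mul_sum,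
      keyT _ _ (by simp [Fin.ext_iff])]
    ring
  rw [permExpect2, Fintype.sum_prod_type]
  dsimp only
  have hfact : ∑ σ : Equiv.Perm (Fin (2 * M)), ∑ π : Equiv.Perm (Fin (2 * M)),
      energy2D M u σ w * (energy2D M u π w') ^ 2
      = (∑ σ : Equiv.Perm (Fin (2 * M)), energy2D M u σ w)
        * (∑ π : Equiv.Perm (Fin (2 * M)), (energy2D M u π w') ^ 2) := by
    rw [Finset.sum_mul_sum]
  have hKK : ((Fintype.card (Equiv.Perm (Fin (2 * M)))
      * Fintype.card (Equiv.Perm (Fin (2 * M))) : ℕ) : ℝ) = K * K := by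
    rw [Nat.cast_mul]
  rw [hfact, hE1, hE2, Fintype.card_prod, hKK, div_eq_iff (mul_ne_zero hK0 hK0)]
  ring
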